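/- Replacing stationarity by T-step evolution: under (HP1)–(HP3), sup over y ∈ X_n and t ∈ ℕ of | ℙ_{μ_{T_n}^y}(τ_{x_n} > t) / ℙ_{π_n}(τ_{x_n} > t) − 1 | → 0 as n → ∞, where μ_T^y := δ_y P_n^T denotes the distribution of the chain started at y and run for T steps. -/
import Mathlib


open Finset Filter

/-- The kernel of the chain killed at `x`: all entries from or to `x` are set to zero.
For `y, z ≠ x` the powers of `killed P x` agree with the powers of the principal
submatrix `[P]_x` of `P` obtained by deleting the row and the column indexed by `x`. -/
def killed {n : ℕ} (P : Matrix (Fin n) (Fin n) ℝ) (x : Fin n) :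
    Matrix (Fin n) (Fin n) ℝ :=
  Matrix.of fun y z => if y = x ∨ z = x then 0 else P y z

/-- The no-hit probability `ℙ_α(τ_x > t) = Σ_{y ≠ x} Σ_{z ≠ x} α(y)·([P]_x)^t(y,z)`. -/
def noHit {n : ℕ} (P : Matrix (Fin n) (Fin n) ℝ) (x : Fin n)
    (a : Fin n → ℝ) (t : ℕ) : ℝ :=
  ∑ y ∈ Finset.univ.erase x, ∑ z ∈ Finset.univ.erase x, a y * ((killed P x) ^ t) y z

/-- The expected number of returns to `x` within time `T`:
`R_T(x) = Σ_{t=0}^{T} P^t(x,x)`. -/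
def returns {n : ℕ} (P : Matrix (Fin n) (Fin n) ℝ) (x : Fin n) (T : ℕ) : ℝ :=
  ∑ t ∈ Finset.range (T + 1), (P ^ t) x x

lemma killed_nonneg {n : ℕ} {P : Matrix (Fin n) (Fin n) ℝ} (hP : ∀ y z, 0 ≤ P y z)
    (x : Fin n) (y z : Fin n) : 0 ≤ killed P x y z := by
  unfold killed
  simp only [Matrix.of_apply]
  split
  · exact le_refl 0
  · exact hP y z

lemma killed_pow_nonneg {n : ℕ} {P : Matrix (Fin n) (Fin n) ℝ} (hP : ∀ y z, 0 ≤ P y z)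
    (x : Fin n) : ∀ (t : ℕ) (y z : Fin n), 0 ≤ ((killed P x) ^ t) y z := by
  intro t
  induction t with
  | zero =>
    intro y z
    simp only [pow_zero, Matrix.one_apply]
    split <;> norm_num
  | succ t ih =>
    intro y z
    rw [pow_succ, Matrix.mul_apply]
    exact Finset.sum_nonneg fun w _ => mul_nonneg (ih y w) (killed_nonneg hP x w z)

lemma killed_pow_col {n : ℕ} (P : Matrix (Fin n) (Fin n) ℝ) (x : Fin n)
    (t : ℕ) (y : Fin n) : ((killed P x) ^ (t + 1)) y x = 0 := by
  rw [pow_succ, Matrix.mul_apply]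
  apply Finset.sum_eq_zero
  intro w _
  have : killed P x w x = 0 := by simp [killed]
  rw [this, mul_zero]

lemma killed_pow_mul_self_pos {n : ℕ} {P : Matrix (Fin n) (Fin n) ℝ}
    (hP : ∀ y z, 0 ≤ P y z) (x y : Fin n) {m : ℕ}
    (hm : 0 < ((killed P x) ^ m) y y) :
    ∀ q : ℕ, 0 < ((killed P x) ^ (m * q)) y y := by
  intro q
  induction q with
  | zero => simp [Matrix.one_apply]
  | succ q ih =>
    have : m * (q + 1) = m * q + m := by ring
    rw [this, pow_add, Matrix.mul_apply]
    refine Finset.sum_pos' (fun w _ => mul_nonneg (killed_pow_nonneg hP x _ y w)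
      (killed_pow_nonneg hP x _ w y)) ⟨y, Finset.mem_univ y, mul_pos ih hm⟩

lemma killed_row_pos {n : ℕ} {P : Matrix (Fin n) (Fin n) ℝ} {x : Fin n}
    (hP : ∀ y z, 0 ≤ P y z) {y z : Fin n} (hyz : y ≠ z) (hy : y ≠ x) (hz : z ≠ x)
    (h1 : ∃ t : ℕ, 0 < ((killed P x) ^ t) y z)
    (h2 : ∃ t : ℕ, 0 < ((killed P x) ^ t) z y) :
    ∀ t : ℕ, ∃ w : Fin n, w ≠ x ∧ 0 < ((killed P x) ^ t) y w := by
  obtain ⟨t1, ht1⟩ := h1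
  obtain ⟨t2, ht2⟩ := h2
  set K := killed P x with hK
  -- t1 ≥ 1
  have ht1pos : 0 < t1 := by
    rcases Nat.eq_zero_or_pos t1 with h | h
    · rw [h, pow_zero, Matrix.one_apply_ne hyz] at ht1
      exact absurd ht1 (lt_irrefl 0)
    · exact h
  set m := t1 + t2 with hmdef
  have hmpos : 0 < m := by omega
  have hm : 0 < (K ^ m) y y := by
    rw [hmdef, pow_add, Matrix.mul_apply]
    refine Finset.sum_pos' (fun w _ => mul_nonneg (killed_pow_nonneg hP x _ y w)
      (killed_pow_nonneg hP x _ w y)) ⟨z, Finset.mem_univ z, mul_pos ht1 ht2⟩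
  intro t
  rcases Nat.eq_zero_or_pos t with h0 | h0
  · refine ⟨y, hy, ?_⟩
    rw [h0]
    simp [Matrix.one_apply]
  · have hle : t ≤ m * t := Nat.le_mul_of_pos_left t hmpos
    have hq : 0 < (K ^ (m * t)) y y := killed_pow_mul_self_pos hP x y hm t
    have hsplit : m * t = t + (m * t - t) := by omega
    rw [hsplit, pow_add, Matrix.mul_apply] at hq
    -- find positive term
    have : ∃ w ∈ Finset.univ, 0 < (K ^ t) y w * (K ^ (m * t - t)) w y := by
      by_contra hcon
      push_neg at hcon
      have : ∑ w, (K ^ t) y w * (K ^ (m * t - t)) w y ≤ 0 :=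
        Finset.sum_nonpos fun w hw => hcon w hw
      linarith
    obtain ⟨w, _, hw⟩ := this
    have hwpos : 0 < (K ^ t) y w := by
      rcases lt_or_eq_of_le (killed_pow_nonneg hP x t y w) with h | h
      · exact h
      · rw [← h, zero_mul] at hw; exact absurd hw (lt_irrefl 0)
    refine ⟨w, ?_, hwpos⟩
    intro hwx
    obtain ⟨s, hs⟩ := Nat.exists_eq_add_of_lt h0
    rw [hwx] at hwpos
    have : (K ^ t) y x = 0 := by
      have := killed_pow_col P x (t - 1) y
      have ht' : t - 1 + 1 = t := by omega
      rwa [ht'] at this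
    rw [this] at hwpos
    exact absurd hwpos (lt_irrefl 0)

lemma noHit_pos {n : ℕ} (hn : 3 ≤ n) {P : Matrix (Fin n) (Fin n) ℝ} {x : Fin n}
    {pi : Fin n → ℝ}
    (hP : ∀ y z, 0 ≤ P y z)
    (hpi : ∀ y : Fin n, 0 < pi y)
    (hkirr : ∀ y z : Fin n, y ≠ x → z ≠ x → ∃ t : ℕ, 0 < ((killed P x) ^ t) y z)
    (t : ℕ) : 0 < noHit P x pi t := by
  have hcard : 1 < (Finset.univ.erase x).card := by
    rw [Finset.card_erase_of_mem (Finset.mem_univ x), Finset.card_univ, Fintype.card_fin]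
    omega
  obtain ⟨y, hy, z, hz, hyz⟩ := Finset.one_lt_card.mp hcard
  have hyx : y ≠ x := (Finset.mem_erase.mp hy).1
  have hzx : z ≠ x := (Finset.mem_erase.mp hz).1
  obtain ⟨w, hwx, hw⟩ := killed_row_pos hP hyz hyx hzx (hkirr y z hyx hzx) (hkirr z y hzx hyx) t
  unfold noHit
  refine Finset.sum_pos' (fun y' _ => Finset.sum_nonneg fun z' _ =>
    mul_nonneg (hpi y').le (killed_pow_nonneg hP x t y' z')) ⟨y, hy, ?_⟩
  refine Finset.sum_pos' (fun z' _ => mul_nonneg (hpi y).le (killed_pow_nonneg hP x t y z'))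
    ⟨w, Finset.mem_erase.mpr ⟨hwx, Finset.mem_univ w⟩, mul_pos (hpi y) hw⟩

theorem tail_from_T_step_evolution
    (P : (n : ℕ) → Matrix (Fin n) (Fin n) ℝ)
    (pi : (n : ℕ) → Fin n → ℝ)
    (x : (n : ℕ) → Fin n)
    (T : ℕ → ℕ) (c : ℝ)
    (hc : 2 < c)
    (hT : Filter.Tendsto T Filter.atTop Filter.atTop)
    (hnn : ∀ n : ℕ, 2 ≤ n → ∀ y z : Fin n, 0 ≤ P n y z)
    (hrow : ∀ n : ℕ, 2 ≤ n → ∀ y : Fin n, ∑ z, P n y z = 1)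
    (hirr : ∀ n : ℕ, 2 ≤ n → ∀ y z : Fin n, ∃ t : ℕ, 0 < (P n ^ t) y z)
    (hpinn : ∀ n : ℕ, 2 ≤ n → ∀ y : Fin n, 0 ≤ pi n y)
    (hpisum : ∀ n : ℕ, 2 ≤ n → ∑ y, pi n y = 1)
    (hpistat : ∀ n : ℕ, 2 ≤ n → Matrix.vecMul (pi n) (P n) = pi n)
    (hpiuniq : ∀ n : ℕ, 2 ≤ n → ∀ rho : Fin n → ℝ, (∀ y, 0 ≤ rho y) →
      (∑ y, rho y = 1) → Matrix.vecMul rho (P n) = rho → rho = pi n)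
    (hkirr : ∀ n : ℕ, 2 ≤ n → ∀ y z : Fin n, y ≠ x n → z ≠ x n →
      ∃ t : ℕ, 0 < ((killed (P n) (x n)) ^ t) y z)
    (HP1 : ∀ ε : ℝ, 0 < ε → ∃ N : ℕ, ∀ n : ℕ, N ≤ n → ∀ y z : Fin n,
      (n : ℝ) ^ c * |(P n ^ T n) y z - pi n z| < ε)
    (HP2 : ∀ ε : ℝ, 0 < ε → ∃ N : ℕ, ∀ n : ℕ, N ≤ n → ∀ y : Fin n,
      (T n : ℝ) * pi n y < ε)
    (HP3 : ∀ M : ℝ, ∃ N : ℕ, ∀ n : ℕ, N ≤ n → ∀ y : Fin n,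
      M < (n : ℝ) ^ 2 * pi n y)
    :
    ∀ ε : ℝ, 0 < ε → ∃ N : ℕ, ∀ n : ℕ, N ≤ n → ∀ y : Fin n, ∀ t : ℕ,
      |noHit (P n) (x n) (fun z => (P n ^ T n) y z) t
        / noHit (P n) (x n) (pi n) t - 1| < ε := by
  intro ε hε
  obtain ⟨N1, hN1⟩ := HP1 (ε / 2) (by linarith)
  obtain ⟨N3, hN3⟩ := HP3 1
  refine ⟨max (max N1 N3) 3, ?_⟩
  intro n hn y t
  have hn3 : 3 ≤ n := le_trans (le_max_right _ 3) hn
  have hn2 : 2 ≤ n := by omega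
  have hN1n : N1 ≤ n := le_trans (le_trans (le_max_left _ _) (le_max_left _ _)) hn
  have hN3n : N3 ≤ n := le_trans (le_trans (le_max_right _ _) (le_max_left _ _)) hn
  have hnpos : (0 : ℝ) < (n : ℝ) := by positivity
  have hn1 : (1 : ℝ) ≤ (n : ℝ) := by exact_mod_cast (by omega : 1 ≤ n)
  have hn2sq : (0 : ℝ) < (n : ℝ) ^ 2 := by positivity
  have hpipos : ∀ z : Fin n, 0 < pi n z := by
    intro z
    have h3 := hN3 n hN3n z
    nlinarith
  -- entrywise relative closeness
  have hclose : ∀ z : Fin n, |(P n ^ T n) y z - pi n z| < ε / 2 * pi n z := by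
    intro z
    have h1 := hN1 n hN1n y z
    have h3 := hN3 n hN3n z
    have hc2 : (n : ℝ) ^ (2 : ℕ) ≤ (n : ℝ) ^ c := by
      rw [← Real.rpow_natCast (n : ℝ) 2]
      exact Real.rpow_le_rpow_of_exponent_le hn1 (by push_cast; linarith)
    have ha : (n : ℝ) ^ 2 * |(P n ^ T n) y z - pi n z| ≤
        (n : ℝ) ^ c * |(P n ^ T n) y z - pi n z| :=
      mul_le_mul_of_nonneg_right hc2 (abs_nonneg _)
    have hb : ε / 2 < ε / 2 * ((n : ℝ) ^ 2 * pi n z) := by nlinarith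
    have hd : (n : ℝ) ^ 2 * |(P n ^ T n) y z - pi n z| <
        (n : ℝ) ^ 2 * (ε / 2 * pi n z) := by nlinarith
    exact lt_of_mul_lt_mul_left hd hn2sq.le
  set K := killed (P n) (x n) with hKdef
  set q : Fin n → ℝ := fun y' => ∑ z ∈ Finset.univ.erase (x n), (K ^ t) y' z with hqdef
  have hqnn : ∀ y' : Fin n, 0 ≤ q y' := fun y' =>
    Finset.sum_nonneg fun z _ => killed_pow_nonneg (hnn n hn2) (x n) t y' z
  have hfact : ∀ a : Fin n → ℝ,
      noHit (P n) (x n) a t = ∑ y' ∈ Finset.univ.erase (x n), a y' * q y' := by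
    intro a
    unfold noHit
    exact Finset.sum_congr rfl fun y' _ => (Finset.mul_sum _ _ _).symm
  set A := noHit (P n) (x n) (fun z => (P n ^ T n) y z) t with hAdef
  set D := noHit (P n) (x n) (pi n) t with hDdef
  have hD : 0 < D := noHit_pos hn3 (hnn n hn2) hpipos (hkirr n hn2) t
  have hdiff : A - D = ∑ y' ∈ Finset.univ.erase (x n),
      ((P n ^ T n) y y' - pi n y') * q y' := by
    rw [hAdef, hDdef, hfact, hfact, ← Finset.sum_sub_distrib]
    exact Finset.sum_congr rfl fun y' _ => by ring
  have hbound : |A - D| ≤ ε / 2 * D := by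
    rw [hdiff]
    calc |∑ y' ∈ Finset.univ.erase (x n), ((P n ^ T n) y y' - pi n y') * q y'|
        ≤ ∑ y' ∈ Finset.univ.erase (x n), |((P n ^ T n) y y' - pi n y') * q y'| :=
          Finset.abs_sum_le_sum_abs _ _
      _ = ∑ y' ∈ Finset.univ.erase (x n), |(P n ^ T n) y y' - pi n y'| * q y' :=
          Finset.sum_congr rfl fun y' _ => by rw [abs_mul, abs_of_nonneg (hqnn y')]
      _ ≤ ∑ y' ∈ Finset.univ.erase (x n), (ε / 2 * pi n y') * q y' :=
          Finset.sum_le_sum fun y' _ =>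
            mul_le_mul_of_nonneg_right (hclose y').le (hqnn y')
      _ = ε / 2 * D := by
          rw [hDdef, hfact, Finset.mul_sum]
          exact Finset.sum_congr rfl fun y' _ => by ring
  have heq : A / D - 1 = (A - D) / D := by field_simp
  rw [heq, abs_div, abs_of_pos hD, div_lt_iff₀ hD]
  nlinarith
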